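/- Let d ≥ 2 and ε > 0, and let p_1, ..., p_n be independent uniform random points in the unit ball B_d ⊂ R^d. Let M = n^{d+1+ε}. Then with probability at least 1 − C/n^ε (for a constant C depending only on d), for every (d+1)-element subset {i_0, ..., i_d} of indices and every k, the distance from p_{i_k} to the hyperplane spanned by the other d points of the subset exceeds 2√d / M. -/

import Mathlib

open MeasureTheory

/-- The uniform probability measure on the closed unit ball of `ℝ^d`. -/
noncomputable def unifBall (d : ℕ) : Measure (EuclideanSpace ℝ (Fin d)) :=
  (volume (Metric.closedBall (0 : EuclideanSpace ℝ (Fin d)) 1))⁻¹ •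
    volume.restrict (Metric.closedBall (0 : EuclideanSpace ℝ (Fin d)) 1)

section Aux

open Metric EMetric Set Finset
open scoped ENNReal NNReal

variable {E : Type*} [NormedAddCommGroup E] [NormedSpace ℝ E]

/-- The rational affine combinations index. -/
def RatW (ι : Type*) [Fintype ι] : Type _ := {w : ι → ℚ // ∑ j, w j = 1}

instance (ι : Type*) [Fintype ι] : Countable (RatW ι) := by
  unfold RatW; infer_instance

noncomputable def ratComb {ι : Type*} [Fintype ι] (q : ι → E) (w : RatW ι) : E :=
  ∑ j, ((w.1 j : ℝ)) • q j

theorem ratComb_mem_span {ι : Type*} [Fintype ι] (q : ι → E) (w : RatW ι) :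
    ratComb q w ∈ affineSpan ℝ (Set.range q) := by
  have hw : ∑ j, ((w.1 j : ℝ)) = 1 := by
    have := w.2; push_cast [← this]; norm_cast
  rw [ratComb, ← Finset.univ.affineCombination_eq_linear_combination q _ hw]
  exact affineCombination_mem_affineSpan hw q

theorem span_eq_closure_ratComb {ι : Type*} [Fintype ι] [FiniteDimensional ℝ E] (q : ι → E) :
    ((affineSpan ℝ (Set.range q) : AffineSubspace ℝ E) : Set E)
      = closure (Set.range (ratComb q)) := by
  refine subset_antisymm ?_ (closure_minimal (Set.range_subset_iff.2 (ratComb_mem_span q))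
    (AffineSubspace.closed_of_finiteDimensional _))
  intro x hx
  cases isEmpty_or_nonempty ι with
  | inl h =>
      rw [Set.range_eq_empty q, AffineSubspace.span_empty] at hx
      simp at hx
  | inr h =>
      classical
      obtain ⟨w, hw, rfl⟩ := eq_affineCombination_of_mem_affineSpan_of_fintype hx
      rw [Finset.univ.affineCombination_eq_linear_combination q w hw]
      set L : (ι → ℝ) → E := fun v => ∑ j, v j • q j with hL
      have hLc : Continuous L := by
        apply continuous_finset_sum
        exact fun j _ => (continuous_apply j).smul continuous_const
      rw [Metric.mem_closure_iff]
      intro δ hδ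
      obtain ⟨η, hη, hLη⟩ := Metric.continuous_iff.mp hLc w δ hδ
      -- build rational approximation
      set m := Fintype.card ι with hm
      have hm1 : 1 ≤ m := Fintype.card_pos
      set η' : ℝ := η / (m + 1) with hη'def
      have hη' : 0 < η' := by positivity
      have hex : ∀ j, ∃ c : ℚ, |w j - (c : ℝ)| < η' := fun j => exists_rat_near (w j) hη'
      choose u hu using hex
      obtain ⟨j0⟩ := h
      set w' : ι → ℚ := fun j => if j = j0 then 1 - ∑ k ∈ Finset.univ.erase j0, u k else u j
        with hw'def
      have hsum : ∑ j, w' j = 1 := by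
        rw [← Finset.add_sum_erase _ w' (Finset.mem_univ j0)]
        have : ∑ k ∈ Finset.univ.erase j0, w' k = ∑ k ∈ Finset.univ.erase j0, u k := by
          apply Finset.sum_congr rfl
          intro k hk
          simp [hw'def, (Finset.mem_erase.mp hk).1]
        rw [this]
        simp [hw'def]
      have hdist : dist ((fun j => (w' j : ℝ))) w < η := by
        rw [dist_pi_lt_iff hη]
        intro j
        by_cases hj : j = j0
        · subst hj
          have hwj : w j = 1 - ∑ k ∈ Finset.univ.erase j, w k := by
            have := Finset.add_sum_erase _ w (Finset.mem_univ j)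
            rw [hw] at this; linarith
          have : (w' j : ℝ) - w j = ∑ k ∈ Finset.univ.erase j, (w k - (u k : ℝ)) := by
            simp only [hw'def, if_pos rfl]
            push_cast
            rw [hwj, Finset.sum_sub_distrib]
            ring
          rw [Real.dist_eq, this]
          calc |∑ k ∈ Finset.univ.erase j, (w k - (u k : ℝ))|
              ≤ ∑ k ∈ Finset.univ.erase j, |w k - (u k : ℝ)| := Finset.abs_sum_le_sum_abs _ _
            _ ≤ (Finset.univ.erase j).card • η' := Finset.sum_le_card_nsmul _ _ _
                (fun k _ => (hu k).le)
            _ = ((Finset.univ.erase j).card : ℝ) * η' := by simp [nsmul_eq_mul]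
            _ < η := by
                have hcard : ((Finset.univ.erase j).card : ℝ) < m + 1 := by
                  have := Finset.card_erase_le (s := (Finset.univ : Finset ι)) (a := j)
                  have h2 : (Finset.univ.erase j).card ≤ m := by simpa [hm] using this
                  exact_mod_cast lt_of_le_of_lt h2 (by omega)
                rw [hη'def]
                rw [div_eq_mul_inv]
                have hpos : (0:ℝ) < m + 1 := by positivity
                calc ((Finset.univ.erase j).card : ℝ) * (η * (↑m + 1)⁻¹)
                    < (m + 1) * (η * (↑m + 1)⁻¹) := by
                      apply mul_lt_mul_of_pos_right hcard
                      positivity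
                  _ = η := by field_simp
        · have := hu j
          rw [Real.dist_eq]
          have hwj : (w' j : ℝ) = (u j : ℝ) := by simp [hw'def, hj]
          rw [hwj, abs_sub_comm]
          calc |w j - (u j : ℝ)| < η' := this
            _ ≤ η := by
                rw [hη'def]
                rw [div_le_iff₀ (by positivity)]
                nlinarith [hη.le]
      refine ⟨ratComb q ⟨w', hsum⟩, Set.mem_range_self _, ?_⟩
      have := hLη _ hdist
      rw [dist_comm] at this
      simpa [ratComb, hL] using this


theorem infEdist_span_eq {ι : Type*} [Fintype ι] [FiniteDimensional ℝ E] (q : ι → E) (x : E) :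
    infEdist x (affineSpan ℝ (Set.range q) : Set E)
      = ⨅ w : RatW ι, edist x (ratComb q w) := by
  rw [span_eq_closure_ratComb]; show infEDist x _ = _; rw [infEDist_closure, infEDist]
  rw [iInf_range]

theorem measurable_infEdist_span {ι Ω : Type*} [Fintype ι] [FiniteDimensional ℝ E]
    [MeasurableSpace E] [BorelSpace E] [SecondCountableTopology E]
    [MeasurableSpace Ω] {g : Ω → E} (hg : Measurable g) {q : ι → Ω → E}
    (hq : ∀ j, Measurable (q j)) :
    Measurable fun ω => infEdist (g ω) (affineSpan ℝ (Set.range fun j => q j ω) : Set E) := by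
  have : (fun ω => infEdist (g ω) (affineSpan ℝ (Set.range fun j => q j ω) : Set E))
      = fun ω => ⨅ w : RatW ι,
          edist (g ω) (∑ j, ((w.1 j : ℝ)) • q j ω) := by
    funext ω
    rw [infEdist_span_eq (fun j => q j ω) (g ω)]
    rfl
  rw [this]
  exact Measurable.iInf fun w => hg.edist (Finset.measurable_sum _ fun j _ => (hq j).const_smul _)


theorem unifBall_apply (d : ℕ) (S : Set (EuclideanSpace ℝ (Fin d))) :
    unifBall d S = (volume (Metric.closedBall (0 : EuclideanSpace ℝ (Fin d)) 1))⁻¹ *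
      volume (S ∩ Metric.closedBall (0 : EuclideanSpace ℝ (Fin d)) 1) := by
  rw [unifBall, Measure.smul_apply, Measure.restrict_apply' measurableSet_closedBall,
    smul_eq_mul]

theorem slab_bound (d : ℕ) (hd : 2 ≤ d) {ι : Type} [Fintype ι] [Nonempty ι]
    (hcard : Fintype.card ι ≤ d) (q : ι → EuclideanSpace ℝ (Fin d)) {r : ℝ} (hr : 0 ≤ r) :
    unifBall d {x | infEdist x (affineSpan ℝ (Set.range q) :
        Set (EuclideanSpace ℝ (Fin d))) ≤ ENNReal.ofReal r} ≤
      (volume (Metric.closedBall (0 : EuclideanSpace ℝ (Fin d)) 1))⁻¹ *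
        (2 ^ (d + 1) * ENNReal.ofReal r) := by
  classical
  set A : AffineSubspace ℝ (EuclideanSpace ℝ (Fin d)) := affineSpan ℝ (Set.range q) with hA
  set j1 : ι := Classical.arbitrary ι
  have ha0 : q j1 ∈ A := mem_affineSpan ℝ (Set.mem_range_self _)
  have hAne : (A : Set (EuclideanSpace ℝ (Fin d))).Nonempty := ⟨q j1, ha0⟩
  have hAclosed : IsClosed (A : Set (EuclideanSpace ℝ (Fin d))) := A.closed_of_finiteDimensional
  -- a unit normal vector
  set K : Submodule ℝ (EuclideanSpace ℝ (Fin d)) := vectorSpan ℝ (Set.range q) with hK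
  have hKne : K ≠ ⊤ := by
    intro htop
    have h1 : Module.finrank ℝ K + 1 ≤ Fintype.card ι :=
      finrank_vectorSpan_range_add_one_le ℝ q
    have h2 : Module.finrank ℝ K = d := by
      rw [htop, finrank_top, finrank_euclideanSpace_fin]
    omega
  have hKbot : Kᗮ ≠ ⊥ := fun h => hKne (Submodule.orthogonal_eq_bot_iff.mp h)
  obtain ⟨v, hvK, hv0⟩ := Submodule.exists_mem_ne_zero_of_ne_bot hKbot
  set u : EuclideanSpace ℝ (Fin d) := ‖v‖⁻¹ • v with hu
  have hunorm : ‖u‖ = 1 := norm_smul_inv_norm hv0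
  have huK : u ∈ Kᗮ := Kᗮ.smul_mem _ hvK
  -- extend to an orthonormal basis
  haveI : NeZero d := ⟨by omega⟩
  set i0 : Fin d := 0
  have hON : Orthonormal ℝ (Set.restrict {i0} (fun _ : Fin d => u)) := by
    constructor
    · intro i; exact hunorm
    · intro i j hij
      exact absurd (Subtype.ext (i.2.trans j.2.symm)) hij
  obtain ⟨b, hb⟩ := hON.exists_orthonormalBasis_extension_of_card_eq
    (by simp [finrank_euclideanSpace_fin])
  have hbi0 : b i0 = u := hb i0 rfl
  set c : ℝ := inner ℝ u (q j1) with hc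
  -- the box
  set f : Fin d → Set ℝ := fun j => if j = i0 then Set.Icc (c - r) (c + r) else Set.Icc (-1) 1
    with hf
  have hfmeas : ∀ j, MeasurableSet (f j) := by
    intro j; rw [hf]; dsimp only; split <;> exact measurableSet_Icc
  set φ : EuclideanSpace ℝ (Fin d) → (Fin d → ℝ) :=
    (MeasurableEquiv.toLp 2 (Fin d → ℝ)).symm ∘ b.repr with hφ
  have hφmp : MeasurePreserving φ volume volume :=
    (EuclideanSpace.volume_preserving_symm_measurableEquiv_toLp (Fin d)).comp
      b.measurePreserving_repr
  -- inclusion in the slab box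
  have hsub : {x : EuclideanSpace ℝ (Fin d) |
      infEdist x (A : Set (EuclideanSpace ℝ (Fin d))) ≤ ENNReal.ofReal r} ∩
      Metric.closedBall (0 : EuclideanSpace ℝ (Fin d)) 1 ⊆ φ ⁻¹' (Set.univ.pi f) := by
    rintro x ⟨hx1, hx2⟩
    have hinf : Metric.infDist x (A : Set (EuclideanSpace ℝ (Fin d))) ≤ r :=
      ENNReal.toReal_le_of_le_ofReal hr hx1
    obtain ⟨y, hyA, hxy⟩ := hAclosed.exists_infDist_eq_dist hAne x
    have hdxy : dist x y ≤ r := by rw [← hxy]; exact hinf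
    intro j _
    have hφx : φ x j = inner ℝ (b j) x := by
      simp [hφ, MeasurableEquiv.toLp_symm_apply, b.repr_apply_apply]
    by_cases hj : j = i0
    · subst hj
      have horth : (inner ℝ u (y - q j1) : ℝ) = 0 := by
        have hmem : y - q j1 ∈ K := by
          have := AffineSubspace.vsub_mem_direction hyA ha0
          rwa [hA, direction_affineSpan, vsub_eq_sub] at this
        have := (Submodule.mem_orthogonal K u).mp huK _ hmem
        rwa [real_inner_comm] at this
      have key : |(inner ℝ u x : ℝ) - c| ≤ r := by
        have h1 : (inner ℝ u x : ℝ) - c = inner ℝ u (x - y) + inner ℝ u (y - q j1) := by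
          rw [hc, inner_sub_right, inner_sub_right]; ring
        rw [h1, horth, add_zero]
        calc |(inner ℝ u (x - y) : ℝ)| ≤ ‖u‖ * ‖x - y‖ := abs_real_inner_le_norm u (x - y)
          _ = dist x y := by rw [hunorm, one_mul, dist_eq_norm]
          _ ≤ r := hdxy
      have hmem : φ x i0 ∈ Set.Icc (c - r) (c + r) := by
        rw [hφx, hbi0, Set.mem_Icc]
        have := abs_le.mp key
        constructor <;> linarith [this.1, this.2]
      simpa [hf] using hmem
    · have hmem : φ x j ∈ Set.Icc (-1 : ℝ) 1 := by
        rw [hφx]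
        have h1 : |(inner ℝ (b j) x : ℝ)| ≤ ‖b j‖ * ‖x‖ := abs_real_inner_le_norm _ _
        have h2 : ‖b j‖ = 1 := b.orthonormal.1 j
        have h3 : ‖x‖ ≤ 1 := mem_closedBall_zero_iff.mp hx2
        rw [h2, one_mul] at h1
        exact Set.mem_Icc.mpr (abs_le.mp (h1.trans h3))
      simpa [hf, if_neg hj] using hmem
  -- volume of the box
  have hbox : volume (φ ⁻¹' (Set.univ.pi f)) ≤ 2 ^ (d + 1) * ENNReal.ofReal r := by
    rw [hφmp.measure_preimage (MeasurableSet.univ_pi hfmeas).nullMeasurableSet]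
    rw [volume_pi_pi]
    have hprod : ∏ j, volume (f j) = volume (f i0) * ∏ j ∈ Finset.univ.erase i0, volume (f j) :=
      (Finset.mul_prod_erase _ _ (Finset.mem_univ i0)).symm
    rw [hprod]
    have h0 : volume (f i0) = ENNReal.ofReal (2 * r) := by
      have : f i0 = Set.Icc (c - r) (c + r) := by rw [hf]; simp
      rw [this, Real.volume_Icc]; ring_nf
    have h1 : ∏ j ∈ Finset.univ.erase i0, volume (f j) ≤ 2 ^ d := by
      calc ∏ j ∈ Finset.univ.erase i0, volume (f j)
          ≤ ∏ _j ∈ Finset.univ.erase i0, (2 : ℝ≥0∞) := by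
            apply Finset.prod_le_prod'
            intro j hj
            have : f j = Set.Icc (-1 : ℝ) 1 := by
              rw [hf]; simp [(Finset.mem_erase.mp hj).1]
            rw [this, Real.volume_Icc]
            norm_num
        _ = 2 ^ (Finset.univ.erase i0).card := Finset.prod_const 2
        _ ≤ 2 ^ d := by
            apply pow_le_pow_right₀ one_le_two
            exact Finset.card_erase_le.trans (by simp)
    calc volume (f i0) * ∏ j ∈ Finset.univ.erase i0, volume (f j)
        ≤ ENNReal.ofReal (2 * r) * 2 ^ d := by
          rw [h0]; exact mul_le_mul_right h1 _
      _ = 2 ^ (d + 1) * ENNReal.ofReal r := by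
          rw [ENNReal.ofReal_mul (by norm_num : (0:ℝ) ≤ 2)]
          have h2 : ENNReal.ofReal 2 = 2 := by norm_num
          rw [h2, pow_succ]
          ring
  calc unifBall d {x | infEdist x (A : Set (EuclideanSpace ℝ (Fin d))) ≤ ENNReal.ofReal r}
      = (volume (Metric.closedBall (0 : EuclideanSpace ℝ (Fin d)) 1))⁻¹ *
        volume ({x | infEdist x (A : Set (EuclideanSpace ℝ (Fin d))) ≤ ENNReal.ofReal r} ∩
          Metric.closedBall (0 : EuclideanSpace ℝ (Fin d)) 1) := unifBall_apply d _
    _ ≤ (volume (Metric.closedBall (0 : EuclideanSpace ℝ (Fin d)) 1))⁻¹ *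
        (2 ^ (d + 1) * ENNReal.ofReal r) := by
        apply mul_le_mul_right
        exact (measure_mono hsub).trans hbox


theorem volBall_pos (d : ℕ) (hd : 1 ≤ d) :
    0 < volume (Metric.closedBall (0 : EuclideanSpace ℝ (Fin d)) 1) := by
  haveI : Nonempty (Fin d) := ⟨⟨0, by omega⟩⟩
  haveI : Nontrivial (EuclideanSpace ℝ (Fin d)) := inferInstance
  exact measure_closedBall_pos volume 0 one_pos

theorem volBall_lt_top (d : ℕ) :
    volume (Metric.closedBall (0 : EuclideanSpace ℝ (Fin d)) 1) < ⊤ :=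
  (isCompact_closedBall 0 1).measure_lt_top

theorem unifBall_prob (d : ℕ) (hd : 1 ≤ d) : IsProbabilityMeasure (unifBall d) := by
  constructor
  rw [unifBall, Measure.smul_apply, Measure.restrict_apply' measurableSet_closedBall,
    Set.univ_inter, smul_eq_mul]
  exact ENNReal.inv_mul_cancel (volBall_pos d hd).ne' (volBall_lt_top d).ne


theorem event_bound (d : ℕ) (hd : 2 ≤ d) (n : ℕ) (i : Fin n) (t : Finset (Fin n))
    (hit : i ∉ t) (htcard : t.card = d) {r : ℝ} (hr : 0 ≤ r) :
    (Measure.pi fun _ : Fin n => unifBall d)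
      {p : Fin n → EuclideanSpace ℝ (Fin d) |
        infEdist (p i) (affineSpan ℝ (p '' (↑t : Set (Fin n))) :
          Set (EuclideanSpace ℝ (Fin d))) ≤ ENNReal.ofReal r} ≤
      (volume (Metric.closedBall (0 : EuclideanSpace ℝ (Fin d)) 1))⁻¹ *
        (2 ^ (d + 1) * ENNReal.ofReal r) := by
  classical
  haveI := unifBall_prob d (by omega)
  -- the subtype coordinate
  haveI hiu : Unique {j : Fin n // ¬ j ≠ i} :=
    ⟨⟨⟨i, not_not_intro rfl⟩⟩, fun a => Subtype.ext (not_not.mp a.2)⟩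
  have hmem : ∀ j : ↥(↑t : Set (Fin n)), (j : Fin n) ≠ i := fun j h => hit (h ▸ j.2)
  -- the target set in the product space
  set T : Set (({j : Fin n // j ≠ i} → (EuclideanSpace ℝ (Fin d))) × ({j : Fin n // ¬ j ≠ i} → (EuclideanSpace ℝ (Fin d)))) :=
    {y | infEdist (y.2 ⟨i, not_not_intro rfl⟩)
      (affineSpan ℝ (Set.range fun j : ↥(↑t : Set (Fin n)) => y.1 ⟨j.1, hmem j⟩) : Set (EuclideanSpace ℝ (Fin d)))
        ≤ ENNReal.ofReal r} with hT
  have hTmeas : MeasurableSet T := by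
    have hmeas : Measurable fun y : (({j : Fin n // j ≠ i} → (EuclideanSpace ℝ (Fin d))) × ({j : Fin n // ¬ j ≠ i} → (EuclideanSpace ℝ (Fin d)))) =>
        infEdist (y.2 ⟨i, not_not_intro rfl⟩)
          (affineSpan ℝ (Set.range fun j : ↥(↑t : Set (Fin n)) => y.1 ⟨j.1, hmem j⟩) : Set (EuclideanSpace ℝ (Fin d))) :=
      measurable_infEdist_span ((measurable_pi_apply _).comp measurable_snd)
        (fun j => (measurable_pi_apply _).comp measurable_fst)
    exact hmeas measurableSet_Iic
  -- rewrite the event as a preimage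
  have hpre : {p : Fin n → (EuclideanSpace ℝ (Fin d)) |
      infEdist (p i) (affineSpan ℝ (p '' (↑t : Set (Fin n))) : Set (EuclideanSpace ℝ (Fin d))) ≤ ENNReal.ofReal r}
      = (MeasurableEquiv.piEquivPiSubtypeProd (fun _ : Fin n => (EuclideanSpace ℝ (Fin d))) (fun j => j ≠ i)) ⁻¹' T := by
    ext p
    simp only [Set.mem_setOf_eq, Set.mem_preimage, hT,
      MeasurableEquiv.piEquivPiSubtypeProd, MeasurableEquiv.coe_mk,
      Equiv.piEquivPiSubtypeProd_apply]
    have h1 : p '' (↑t : Set (Fin n)) = Set.range fun j : ↥(↑t : Set (Fin n)) => p j.1 :=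
      Set.image_eq_range p _
    rw [h1]
  rw [hpre,
    (measurePreserving_piEquivPiSubtypeProd (fun _ : Fin n => unifBall d)
      (fun j => j ≠ i)).measure_preimage hTmeas.nullMeasurableSet]
  rw [Measure.prod_apply hTmeas]
  -- bound the slices
  have hslice : ∀ y1 : {j : Fin n // j ≠ i} → (EuclideanSpace ℝ (Fin d)),
      (Measure.pi fun _ : {j : Fin n // ¬ j ≠ i} => unifBall d) (Prod.mk y1 ⁻¹' T) ≤
      (volume (Metric.closedBall (0 : (EuclideanSpace ℝ (Fin d))) 1))⁻¹ * (2 ^ (d + 1) * ENNReal.ofReal r) := by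
    intro y1
    haveI : Nonempty ↥(↑t : Set (Fin n)) := by
      rw [Set.nonempty_coe_sort, Finset.coe_nonempty]
      exact Finset.card_pos.mp (by omega)
    set q : ↥(↑t : Set (Fin n)) → (EuclideanSpace ℝ (Fin d)) := fun j => y1 ⟨j.1, hmem j⟩ with hq
    have h2 : Prod.mk y1 ⁻¹' T =
        (MeasurableEquiv.funUnique {j : Fin n // ¬ j ≠ i} (EuclideanSpace ℝ (Fin d))) ⁻¹'
          {x : (EuclideanSpace ℝ (Fin d)) | infEdist x (affineSpan ℝ (Set.range q) : Set (EuclideanSpace ℝ (Fin d))) ≤ ENNReal.ofReal r} := by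
      ext y2
      have hy2 : y2 (⟨i, not_not_intro rfl⟩ : {j : Fin n // ¬ j ≠ i}) = y2 default :=
        congrArg y2 (Subsingleton.elim _ _)
      simp only [hT, Set.mem_preimage, Set.mem_setOf_eq, MeasurableEquiv.funUnique,
        MeasurableEquiv.piUnique, MeasurableEquiv.coe_mk, Equiv.piUnique_apply, hq, hy2]
    have hSmeas : MeasurableSet {x : (EuclideanSpace ℝ (Fin d)) |
        infEdist x (affineSpan ℝ (Set.range q) : Set (EuclideanSpace ℝ (Fin d))) ≤ ENNReal.ofReal r} :=
      measurable_infEdist_span measurable_id (fun j => measurable_const) measurableSet_Iic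
    rw [h2]
    have key := (measurePreserving_funUnique (unifBall d)
      {j : Fin n // ¬ j ≠ i}).measure_preimage hSmeas.nullMeasurableSet
    have key2 : (Measure.pi fun _ : {j : Fin n // ¬ j ≠ i} => unifBall d)
        ((MeasurableEquiv.funUnique {j : Fin n // ¬ j ≠ i} (EuclideanSpace ℝ (Fin d))) ⁻¹'
          {x : EuclideanSpace ℝ (Fin d) | infEdist x
            (affineSpan ℝ (Set.range q) : Set (EuclideanSpace ℝ (Fin d))) ≤ ENNReal.ofReal r})
        = unifBall d {x : EuclideanSpace ℝ (Fin d) | infEdist x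
            (affineSpan ℝ (Set.range q) : Set (EuclideanSpace ℝ (Fin d))) ≤ ENNReal.ofReal r} := by
      convert key using 3 <;>
        first
          | rfl
          | exact Subsingleton.elim _ _
    rw [key2]
    have hcard : Fintype.card ↥(↑t : Set (Fin n)) ≤ d := by
      simpa using htcard.le
    exact slab_bound d hd hcard q hr
  calc ∫⁻ y1, (Measure.pi fun _ : {j : Fin n // ¬ j ≠ i} => unifBall d) (Prod.mk y1 ⁻¹' T)
        ∂(Measure.pi fun _ : {j : Fin n // j ≠ i} => unifBall d)
      ≤ ∫⁻ _, (volume (Metric.closedBall (0 : (EuclideanSpace ℝ (Fin d))) 1))⁻¹ * (2 ^ (d + 1) * ENNReal.ofReal r)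
        ∂(Measure.pi fun _ : {j : Fin n // j ≠ i} => unifBall d) := lintegral_mono hslice
    _ = (volume (Metric.closedBall (0 : (EuclideanSpace ℝ (Fin d))) 1))⁻¹ * (2 ^ (d + 1) * ENNReal.ofReal r) := by
        rw [lintegral_const, measure_univ, mul_one]


end Aux

section Main
open Metric EMetric Set Finset
open scoped ENNReal NNReal

theorem stmt_12 (d : ℕ) (hd : 2 ≤ d) (ε : ℝ) (hε : 0 < ε) :
    ∃ C : ℝ, 0 < C ∧ ∀ n : ℕ, 0 < n →
      1 - ENNReal.ofReal (C / (n : ℝ) ^ ε) ≤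
        (Measure.pi fun _ : Fin n => unifBall d)
          {p : Fin n → EuclideanSpace ℝ (Fin d) |
            ∀ s : Finset (Fin n), s.card = d + 1 → ∀ i ∈ s,
              2 * Real.sqrt d / (n : ℝ) ^ ((d : ℝ) + 1 + ε) <
                Metric.infDist (p i)
                  ((affineSpan ℝ (p '' (↑(s.erase i) : Set (Fin n)))) :
                    Set (EuclideanSpace ℝ (Fin d)))} := by
  classical
  haveI := unifBall_prob d (by omega)
  set V : ℝ := (volume (Metric.closedBall (0 : EuclideanSpace ℝ (Fin d)) 1)).toReal with hV
  have hVpos : 0 < V :=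
    ENNReal.toReal_pos (volBall_pos d (by omega)).ne' (volBall_lt_top d).ne
  have hsd : 0 < Real.sqrt d := Real.sqrt_pos.mpr (by positivity)
  refine ⟨((d : ℝ) + 1) * 2 ^ (d + 1) * (2 * Real.sqrt d) / V, by positivity, ?_⟩
  intro n hn
  set μ := Measure.pi fun _ : Fin n => unifBall d with hμ
  set r : ℝ := 2 * Real.sqrt d / (n : ℝ) ^ ((d : ℝ) + 1 + ε) with hrdef
  have hnpos : (0 : ℝ) < n := by exact_mod_cast hn
  have hr : 0 ≤ r := by positivity
  set G : Set (Fin n → EuclideanSpace ℝ (Fin d)) :=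
    {p | ∀ s : Finset (Fin n), s.card = d + 1 → ∀ i ∈ s,
      r < Metric.infDist (p i)
        ((affineSpan ℝ (p '' (↑(s.erase i) : Set (Fin n)))) :
          Set (EuclideanSpace ℝ (Fin d)))} with hG
  -- bad events
  set Ebad : Finset (Fin n) → Fin n → Set (Fin n → EuclideanSpace ℝ (Fin d)) :=
    fun s i => {p | infEdist (p i)
      (affineSpan ℝ (p '' (↑(s.erase i) : Set (Fin n))) :
        Set (EuclideanSpace ℝ (Fin d))) ≤ ENNReal.ofReal r} with hEbad
  have hsubset : Gᶜ ⊆ ⋃ s ∈ Finset.univ.powersetCard (d + 1), ⋃ i ∈ s, Ebad s i := by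
    intro p hp
    simp only [hG, Set.mem_compl_iff, Set.mem_setOf_eq, not_forall] at hp
    obtain ⟨s, hscard, i, his, hle⟩ := hp
    rw [not_lt] at hle
    have hne : ((affineSpan ℝ (p '' (↑(s.erase i) : Set (Fin n)))) :
        Set (EuclideanSpace ℝ (Fin d))).Nonempty := by
      have : (s.erase i).Nonempty := by
        apply Finset.card_pos.mp
        rw [Finset.card_erase_of_mem his, hscard]; omega
      obtain ⟨j, hj⟩ := this
      exact ⟨p j, mem_affineSpan ℝ (Set.mem_image_of_mem p (by exact_mod_cast hj))⟩
    have hfin : infEdist (p i) ((affineSpan ℝ (p '' (↑(s.erase i) : Set (Fin n)))) :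
        Set (EuclideanSpace ℝ (Fin d))) ≠ ⊤ := infEdist_ne_top hne
    have hEmem : p ∈ Ebad s i := by
      rw [hEbad]
      simp only [Set.mem_setOf_eq]
      exact (ENNReal.le_ofReal_iff_toReal_le hfin hr).mpr hle
    simp only [Set.mem_iUnion, exists_prop]
    exact ⟨s, by rwa [Finset.mem_powersetCard_univ], i, his, hEmem⟩
  -- union bound
  have hbadbound : μ Gᶜ ≤
      ENNReal.ofReal (((d : ℝ) + 1) * 2 ^ (d + 1) * (2 * Real.sqrt d) / V / (n : ℝ) ^ ε) := by
    have step1 : μ Gᶜ ≤ ∑ s ∈ Finset.univ.powersetCard (d + 1), ∑ i ∈ s, μ (Ebad s i) :=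
      (measure_mono hsubset).trans
        ((measure_biUnion_finset_le _ _).trans
          (Finset.sum_le_sum fun s _ => measure_biUnion_finset_le _ _))
    have step2 : ∀ s ∈ Finset.univ.powersetCard (d + 1), ∀ i ∈ s,
        μ (Ebad s i) ≤ (volume (Metric.closedBall (0 : EuclideanSpace ℝ (Fin d)) 1))⁻¹ *
          (2 ^ (d + 1) * ENNReal.ofReal r) := by
      intro s hs i hi
      have hscard : s.card = d + 1 := (Finset.mem_powersetCard_univ).mp hs
      exact event_bound d hd n i (s.erase i) (Finset.notMem_erase i s)
        (by rw [Finset.card_erase_of_mem hi, hscard]; omega) hr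
    set K : ℝ≥0∞ := (volume (Metric.closedBall (0 : EuclideanSpace ℝ (Fin d)) 1))⁻¹ *
      (2 ^ (d + 1) * ENNReal.ofReal r) with hK
    have step3 : μ Gᶜ ≤ (n.choose (d + 1) : ℝ≥0∞) * ((d + 1 : ℕ) * K) := by
      refine step1.trans ?_
      calc ∑ s ∈ Finset.univ.powersetCard (d + 1), ∑ i ∈ s, μ (Ebad s i)
          ≤ ∑ s ∈ Finset.univ.powersetCard (d + 1), ((d + 1 : ℕ) * K) := by
            apply Finset.sum_le_sum
            intro s hs
            calc ∑ i ∈ s, μ (Ebad s i) ≤ ∑ _i ∈ s, K :=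
                  Finset.sum_le_sum (step2 s hs)
              _ = s.card * K := by rw [Finset.sum_const, nsmul_eq_mul]
              _ = (d + 1 : ℕ) * K := by
                  rw [(Finset.mem_powersetCard_univ).mp hs]
        _ = ((Finset.univ.powersetCard (d + 1)).card : ℝ≥0∞) * ((d + 1 : ℕ) * K) := by
            rw [Finset.sum_const, nsmul_eq_mul]
        _ = (n.choose (d + 1) : ℝ≥0∞) * ((d + 1 : ℕ) * K) := by
            rw [Finset.card_powersetCard, Finset.card_univ, Fintype.card_fin]
    refine step3.trans ?_
    -- turn everything into ofReal
    have hVof : volume (Metric.closedBall (0 : EuclideanSpace ℝ (Fin d)) 1)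
        = ENNReal.ofReal V := by
      rw [hV, ENNReal.ofReal_toReal (volBall_lt_top d).ne]
    have hKof : K = ENNReal.ofReal (V⁻¹ * (2 ^ (d + 1) * r)) := by
      rw [hK, hVof, ← ENNReal.ofReal_inv_of_pos hVpos]
      rw [ENNReal.ofReal_mul (by positivity), ENNReal.ofReal_mul (by positivity)]
      congr 1
      rw [ENNReal.ofReal_pow (by norm_num)]
      norm_num
    rw [hKof]
    calc (n.choose (d + 1) : ℝ≥0∞) * ((d + 1 : ℕ) * ENNReal.ofReal (V⁻¹ * (2 ^ (d + 1) * r)))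
        ≤ ((n : ℝ≥0∞) ^ (d + 1)) * ((d + 1 : ℕ) * ENNReal.ofReal (V⁻¹ * (2 ^ (d + 1) * r))) := by
          apply mul_le_mul_left
          exact_mod_cast Nat.cast_le.mpr (Nat.choose_le_pow n (d + 1))
      _ = ENNReal.ofReal ((n : ℝ) ^ (d + 1)) * (ENNReal.ofReal ((d : ℝ) + 1) *
          ENNReal.ofReal (V⁻¹ * (2 ^ (d + 1) * r))) := by
          congr 1
          · rw [ENNReal.ofReal_pow (by positivity : (0:ℝ) ≤ (n:ℝ)), ENNReal.ofReal_natCast]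
          · congr 1
            rw [← ENNReal.ofReal_natCast (d + 1)]
            congr 1
            push_cast; ring
      _ = ENNReal.ofReal ((n : ℝ) ^ (d + 1) * (((d : ℝ) + 1) * (V⁻¹ * (2 ^ (d + 1) * r)))) := by
          rw [← ENNReal.ofReal_mul (by positivity), ← ENNReal.ofReal_mul (by positivity)]
      _ ≤ ENNReal.ofReal (((d : ℝ) + 1) * 2 ^ (d + 1) * (2 * Real.sqrt d) / V / (n : ℝ) ^ ε) := by
          apply ENNReal.ofReal_le_ofReal
          apply le_of_eq
          have hpow : ((n : ℝ) ^ (d + 1)) = (n : ℝ) ^ (((d : ℝ)) + 1) := by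
            rw [← Real.rpow_natCast (n : ℝ) (d + 1)]
            push_cast; ring_nf
          have hsplit : (n:ℝ) ^ ((d:ℝ)+1) * ((n:ℝ) ^ ((d:ℝ)+1+ε))⁻¹ = ((n:ℝ) ^ ε)⁻¹ := by
            rw [← div_eq_mul_inv, ← Real.rpow_sub hnpos]
            have h3 : (d : ℝ) + 1 - ((d : ℝ) + 1 + ε) = -ε := by ring
            rw [h3, Real.rpow_neg hnpos.le]
          rw [hrdef, hpow]
          linear_combination (((d:ℝ)+1) * V⁻¹ * 2^(d+1) * (2*Real.sqrt d)) * hsplit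
  -- conclude
  have huniv : (1 : ℝ≥0∞) ≤ μ G + μ Gᶜ := by
    rw [← measure_univ (μ := μ), ← Set.union_compl_self G]
    exact measure_union_le _ _
  have h2 : 1 - μ Gᶜ ≤ μ G := by
    rw [tsub_le_iff_right]
    exact huniv
  refine le_trans ?_ h2
  exact tsub_le_tsub_left hbadbound 1


end Main
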